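/- Let P ∈ ℚ[z_1,…,z_m] be a polynomial in m variables over the rationals with positive leading coefficient (with respect to the anti-lexicographic order on multi-indices) and with no constant term. Then there exists N ∈ ℕ such that: there exists n̄_1 such that for all natural numbers n_1 ≥ n̄_1, there exists n̄_2 such that for all n_2 ≥ n̄_2, …, there exists n̄_m such that for all n_m ≥ n̄_m, one has P(n_1 N, n_2 N, …, n_m N) ∈ ℕ (a positive integer). In particular, the polynomial function P satisfies condition (‡): there exist n̄_1, N_1 ∈ ℕ such that for all n_1 ≥ n̄_1 there exist n̄_2, N_2 such that for all n_2 ≥ n̄_2 … there exist n̄_m, N_m such that for all n_m ≥ n̄_m, f(n_1N_1,…,n_mN_m) ∈ ℕ. -/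

import Mathlib

/-- The anti-lexicographic (strict) order on multi-indices: α < β iff α_i < β_i where
i = max{j : α_j ≠ β_j}; equivalently, α_i < β_i for some i with α_j = β_j for all j > i. -/
def AntiLexLT {m : ℕ} (a b : Fin m →₀ ℕ) : Prop :=
  ∃ i : Fin m, a i < b i ∧ ∀ j : Fin m, i < j → a j = b j

/-- The alternating quantifier string over the positive integers:
∃ n̄₁ ∀ n₁ ≥ n̄₁ ∃ n̄₂ ∀ n₂ ≥ n̄₂ … ∃ n̄_m ∀ n_m ≥ n̄_m, Q(n₁,…,n_m). -/
def AltQuantNat : (m : ℕ) → ((Fin m → ℕ) → Prop) → Prop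
  | 0, Q => Q Fin.elim0
  | m + 1, Q => ∃ nbar : ℕ, 0 < nbar ∧
      ∀ n : ℕ, nbar ≤ n → AltQuantNat m (fun v => Q (Fin.cons n v))

/-- Condition (‡) for a property Q of m-tuples of positive integers:
∃ n̄₁,N₁ ∀ n₁ ≥ n̄₁ ∃ n̄₂,N₂ ∀ n₂ ≥ n̄₂ … ∃ n̄_m,N_m ∀ n_m ≥ n̄_m, Q(n₁N₁,…,n_mN_m). -/
def DDagger : (m : ℕ) → ((Fin m → ℕ) → Prop) → Prop
  | 0, Q => Q Fin.elim0
  | m + 1, Q => ∃ nbar N : ℕ, 0 < nbar ∧ 0 < N ∧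
      ∀ n : ℕ, nbar ≤ n → DDagger m (fun v => Q (Fin.cons (n * N) v))

lemma altMono : ∀ (m : ℕ) (Q Q' : (Fin m → ℕ) → Prop),
    (∀ v, Q v → Q' v) → AltQuantNat m Q → AltQuantNat m Q'
  | 0, _, _, h, hQ => h _ hQ
  | m + 1, _, _, h, ⟨nbar, hpos, hQ⟩ =>
    ⟨nbar, hpos, fun n hn => altMono m _ _ (fun _ => h _) (hQ n hn)⟩

lemma ddagger_of_alt : ∀ (m : ℕ) (Q : (Fin m → ℕ) → Prop) (N : ℕ), 0 < N →
    AltQuantNat m (fun v => Q (fun i => v i * N)) → DDagger m Q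
  | 0, Q, N, hN, h => by
    show Q Fin.elim0
    have h' : Q (fun i => Fin.elim0 i * N) := h
    have e : (fun i : Fin 0 => Fin.elim0 i * N) = Fin.elim0 := funext fun i => i.elim0
    rwa [e] at h'
  | m + 1, Q, N, hN, ⟨nbar, hpos, h⟩ => by
    refine ⟨nbar, N, hpos, hN, fun n hn => ?_⟩
    refine ddagger_of_alt m _ N hN (altMono m _ _ (fun v hv => ?_) (h n hn))
    show Q (Fin.cons (n * N) (fun i => v i * N))
    have hv' : Q (fun i => (Fin.cons n v : Fin (m+1) → ℕ) i * N) := hv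
    have e : (fun i => (Fin.cons n v : Fin (m+1) → ℕ) i * N) = Fin.cons (n * N) (fun i => v i * N) := by
      funext i
      refine Fin.cases ?_ (fun j => ?_) i <;> simp
    rwa [e] at hv'

open Polynomial Filter in
lemma polyEventuallyPos (p : ℚ[X]) (hp : 0 < p.leadingCoeff) :
    ∃ B : ℚ, ∀ x : ℚ, B ≤ x → 0 < p.eval x := by
  by_cases hd : 0 < p.degree
  · have := p.tendsto_atTop_of_leadingCoeff_nonneg hd hp.le
    have h2 := this.eventually_gt_atTop 0
    rw [eventually_atTop] at h2
    obtain ⟨B, hB⟩ := h2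
    exact ⟨B, fun x hx => hB x hx⟩
  · have hdeg : p.natDegree = 0 := natDegree_eq_zero_iff_degree_le_zero.mpr (not_lt.mp hd)
    have : p = C p.leadingCoeff := by
      rw [Polynomial.leadingCoeff, hdeg, ← Polynomial.eq_C_of_degree_le_zero (not_lt.mp hd)]
    exact ⟨0, fun x _ => by rw [this]; simpa using hp⟩

open MvPolynomial in
lemma posLemma : ∀ (m : ℕ) (P : MvPolynomial (Fin m) ℚ) (N : ℚ), 1 ≤ N →
    (∃ α ∈ P.support, 0 < P.coeff α ∧ ∀ β ∈ P.support, β ≠ α → AntiLexLT β α) →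
    AltQuantNat m (fun v => 0 < MvPolynomial.eval (fun i => (v i : ℚ) * N) P) := by
  intro m
  induction m with
  | zero =>
    intro P N _ hlead
    obtain ⟨α, hαs, hαpos, -⟩ := hlead
    show 0 < MvPolynomial.eval _ P
    have hα0 : α = 0 := Finsupp.ext fun i => i.elim0
    rw [eq_C_of_isEmpty P, eval_C, ← hα0]
    exact hαpos
  | succ m ih =>
    intro P N hN hlead
    obtain ⟨α, hαs, hαpos, hmax⟩ := hlead
    classical
    set β₀ := Finsupp.tail α with hβ₀def
    set k₀ := α 0 with hk₀def
    set dp : (Fin m →₀ ℕ) → Polynomial ℚ := fun β =>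
      ∑ a ∈ P.support, if Finsupp.tail a = β then Polynomial.C (P.coeff a) * Polynomial.X ^ (a 0) else 0 with hdpdef
    set R : ℚ → MvPolynomial (Fin m) ℚ := fun x =>
      ∑ a ∈ P.support, MvPolynomial.monomial (Finsupp.tail a) (P.coeff a * x ^ (a 0)) with hRdef
    have hcoeffR : ∀ (x : ℚ) (β : Fin m →₀ ℕ),
        MvPolynomial.coeff β (R x) = (dp β).eval x := by
      intro x β
      rw [hRdef, hdpdef]
      rw [MvPolynomial.coeff_sum, Polynomial.eval_finset_sum]
      refine Finset.sum_congr rfl fun a _ => ?_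
      rw [MvPolynomial.coeff_monomial]
      split_ifs with h <;> simp
    have hevalR : ∀ (x : ℚ) (s : Fin m → ℚ),
        MvPolynomial.eval (Fin.cons x s) P = MvPolynomial.eval s (R x) := by
      intro x s
      rw [MvPolynomial.eval_eq', hRdef, map_sum]
      refine Finset.sum_congr rfl fun a _ => ?_
      rw [MvPolynomial.eval_monomial, Finsupp.prod_pow, Fin.prod_univ_succ]
      simp only [Fin.cons_zero, Fin.cons_succ, Finsupp.tail_apply]
      ring
    have hdpcoeff : ∀ (β : Fin m →₀ ℕ) (k : ℕ), (dp β).coeff k =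
        ∑ a ∈ P.support, if Finsupp.tail a = β ∧ a 0 = k then P.coeff a else 0 := by
      intro β k
      rw [hdpdef]
      rw [Polynomial.finset_sum_coeff]
      refine Finset.sum_congr rfl fun a _ => ?_
      by_cases h1 : Finsupp.tail a = β
      · simp only [h1, if_true, true_and, Polynomial.coeff_C_mul_X_pow]
        by_cases h2 : a 0 = k
        · simp [h2]
        · rw [if_neg h2, if_neg (fun hc => h2 hc.symm)]
      · simp [h1]
    have hdk₀ : (dp β₀).coeff k₀ = P.coeff α := by
      rw [hdpcoeff, Finset.sum_eq_single α]
      · simp [hβ₀def, hk₀def]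
      · intro a ha hne
        rw [if_neg]
        rintro ⟨h1, h2⟩
        apply hne
        calc a = Finsupp.cons (a 0) (Finsupp.tail a) := (Finsupp.cons_tail a).symm
          _ = Finsupp.cons (α 0) (Finsupp.tail α) := by rw [h1, h2]
          _ = α := Finsupp.cons_tail α
      · intro h; exact absurd hαs h
    have htail_of : ∀ a : Fin (m+1) →₀ ℕ, Finsupp.tail a = β₀ → ∀ t : Fin m, a t.succ = α t.succ := by
      intro a h t
      have := congrFun (congrArg (fun f : Fin m →₀ ℕ => (f : Fin m → ℕ)) h) t
      simpa [Finsupp.tail_apply, hβ₀def] using this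
    have hdhigh : ∀ k : ℕ, k₀ < k → (dp β₀).coeff k = 0 := by
      intro k hk
      rw [hdpcoeff]
      refine Finset.sum_eq_zero fun a ha => ?_
      rw [if_neg]
      rintro ⟨h1, h2⟩
      have hane : a ≠ α := by
        intro e; rw [e] at h2; omega
      obtain ⟨i, hilt, -⟩ := hmax a ha hane
      refine Fin.cases ?_ ?_ i hilt
      · intro h0; rw [h2] at h0; omega
      · intro t ht; rw [htail_of a h1 t] at ht; exact lt_irrefl _ ht
    have hdpos : 0 < (dp β₀).leadingCoeff := by
      have hne : (dp β₀).coeff k₀ ≠ 0 := by rw [hdk₀]; exact hαpos.ne'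
      have hdeg : (dp β₀).natDegree = k₀ :=
        le_antisymm (Polynomial.natDegree_le_iff_coeff_eq_zero.mpr hdhigh)
          (Polynomial.le_natDegree_of_ne_zero hne)
      rw [Polynomial.leadingCoeff, hdeg, hdk₀]
      exact hαpos
    obtain ⟨B, hB⟩ := polyEventuallyPos _ hdpos
    obtain ⟨n₀, hn₀⟩ := exists_nat_ge B
    refine ⟨max n₀ 1, lt_of_lt_of_le one_pos (le_max_right _ _), fun n hn => ?_⟩
    have hn1 : (1:ℕ) ≤ n := le_trans (le_max_right _ _) hn
    set x := (n : ℚ) * N with hxdef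
    have hxB : B ≤ x := by
      have h1 : (n₀ : ℚ) ≤ (n : ℚ) := by
        exact_mod_cast le_trans (le_max_left _ _) hn
      have h2 : (n : ℚ) ≤ (n : ℚ) * N := by
        nlinarith [Nat.cast_nonneg (α := ℚ) n]
      linarith
    have hx : 0 < (dp β₀).eval x := hB x hxB
    have hβ₀mem : β₀ ∈ (R x).support := by
      rw [MvPolynomial.mem_support_iff, hcoeffR]
      exact hx.ne'
    have hRlead : ∃ γ ∈ (R x).support, 0 < (R x).coeff γ ∧
        ∀ β ∈ (R x).support, β ≠ γ → AntiLexLT β γ := by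
      refine ⟨β₀, hβ₀mem, by rw [hcoeffR]; exact hx, fun β hβ hne => ?_⟩
      rw [MvPolynomial.mem_support_iff, hRdef, MvPolynomial.coeff_sum] at hβ
      obtain ⟨a, ha, hcoef⟩ := Finset.exists_ne_zero_of_sum_ne_zero hβ
      have htaila : Finsupp.tail a = β := by
        by_contra hc
        rw [MvPolynomial.coeff_monomial, if_neg hc] at hcoef
        exact hcoef rfl
      have hane : a ≠ α := by
        intro e
        apply hne
        rw [← htaila, e, hβ₀def]
      obtain ⟨i, hilt, hgt⟩ := hmax a ha hane
      refine Fin.cases ?_ ?_ i hilt hgt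
      · intro _ hgt0
        exfalso
        apply hne
        rw [← htaila, hβ₀def]
        ext t
        rw [Finsupp.tail_apply, Finsupp.tail_apply]
        exact hgt0 t.succ t.succ_pos
      · intro t hlt hgt'
        refine ⟨t, ?_, ?_⟩
        · rw [← htaila, hβ₀def, Finsupp.tail_apply, Finsupp.tail_apply]
          exact hlt
        · intro j hj
          rw [← htaila, hβ₀def, Finsupp.tail_apply, Finsupp.tail_apply]
          exact hgt' j.succ (by rwa [Fin.succ_lt_succ_iff])
    have hIH := ih (R x) N hN hRlead
    refine altMono m _ _ (fun v hv => ?_) hIH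
    show 0 < MvPolynomial.eval (fun i => ((Fin.cons n v : Fin (m+1) → ℕ) i : ℚ) * N) P
    have he : (fun i => ((Fin.cons n v : Fin (m+1) → ℕ) i : ℚ) * N)
        = Fin.cons x (fun i => (v i : ℚ) * N) := by
      funext i
      refine Fin.cases ?_ (fun j => ?_) i <;> simp [hxdef]
    rw [he, hevalR]
    exact hv


open MvPolynomial in
lemma integLemma (m : ℕ) (P : MvPolynomial (Fin m) ℚ) (hconst : P.coeff 0 = 0) :
    ∃ N : ℕ, 0 < N ∧ ∀ v : Fin m → ℕ,
      ∃ z : ℤ, MvPolynomial.eval (fun i => (v i : ℚ) * (N : ℚ)) P = (z : ℚ) := by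
  classical
  set N : ℕ := ∏ a ∈ P.support, (P.coeff a).den with hNdef
  refine ⟨N, Finset.prod_pos (fun a _ => (P.coeff a).pos), fun v => ?_⟩
  have hmem : MvPolynomial.eval (fun i => (v i : ℚ) * (N : ℚ)) P ∈ (Int.castRingHom ℚ).range := by
    rw [MvPolynomial.eval_eq']
    refine Subring.sum_mem _ fun a ha => ?_
    have hprod : (∏ i, ((v i : ℚ) * N) ^ (a i))
        = (∏ i, (v i : ℚ) ^ (a i)) * (N : ℚ) ^ (∑ i, a i) := by
      rw [← Finset.prod_pow_eq_pow_sum, ← Finset.prod_mul_distrib]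
      exact Finset.prod_congr rfl fun i _ => mul_pow _ _ _
    have hane : a ≠ 0 := fun e => (MvPolynomial.mem_support_iff.mp ha) (e ▸ hconst)
    have hSum : 1 ≤ ∑ i, a i := by
      obtain ⟨i, hi⟩ := Finsupp.ne_iff.mp hane
      have : a i ≠ 0 := by simpa using hi
      calc 1 ≤ a i := by omega
        _ ≤ ∑ j, a j := Finset.single_le_sum (fun j _ => Nat.zero_le _) (Finset.mem_univ i)
    obtain ⟨S, hS⟩ : ∃ S, ∑ i, a i = S + 1 := ⟨∑ i, a i - 1, by omega⟩
    have hre : P.coeff a * (∏ i, ((v i : ℚ) * N) ^ (a i))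
        = (P.coeff a * N) * ((∏ i, (v i : ℚ) ^ (a i)) * (N : ℚ) ^ S) := by
      rw [hprod, hS, pow_succ]; ring
    rw [hre]
    obtain ⟨k, hk⟩ := Finset.dvd_prod_of_mem (fun a => (P.coeff a).den) ha
    have h1 : P.coeff a * (N : ℚ) ∈ (Int.castRingHom ℚ).range := by
      refine ⟨(P.coeff a).num * k, ?_⟩
      have hcast : ((N : ℕ) : ℚ) = ((P.coeff a).den : ℚ) * (k : ℚ) := by exact_mod_cast hk
      simp only [Int.coe_castRingHom]
      push_cast
      rw [hcast, ← mul_assoc, Rat.mul_den_eq_num]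
    have h2 : (∏ i, (v i : ℚ) ^ (a i)) ∈ (Int.castRingHom ℚ).range :=
      ⟨(∏ i, (v i : ℤ) ^ (a i)), by simp only [Int.coe_castRingHom]; push_cast; rfl⟩
    have h3 : ((N : ℚ)) ^ S ∈ (Int.castRingHom ℚ).range := ⟨(N : ℤ) ^ S, by simp only [Int.coe_castRingHom]; push_cast; rfl⟩
    exact mul_mem h1 (mul_mem h2 h3)
  obtain ⟨z, hz⟩ := hmem
  exact ⟨z, hz.symm⟩

/-- If P ∈ ℚ[z₁,…,z_m] has positive leading coefficient (anti-lexicographic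
order) and no constant term, then there is N ∈ ℕ, N ≥ 1, such that
∃ n̄₁ ∀ n₁ ≥ n̄₁ … ∃ n̄_m ∀ n_m ≥ n̄_m, P(n₁N,…,n_mN) is a positive integer.
In particular, P satisfies condition (‡). -/
theorem rat_poly_satisfies_ddagger (m : ℕ) (P : MvPolynomial (Fin m) ℚ)
    (hlead : ∃ α ∈ P.support, 0 < P.coeff α ∧ ∀ β ∈ P.support, β ≠ α → AntiLexLT β α)
    (hconst : P.coeff 0 = 0) :
    (∃ N : ℕ, 0 < N ∧ AltQuantNat m (fun v => ∃ t : ℕ, 0 < t ∧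
        MvPolynomial.eval (fun i => ((v i : ℚ) * (N : ℚ))) P = (t : ℚ))) ∧
    DDagger m (fun v => ∃ t : ℕ, 0 < t ∧
        MvPolynomial.eval (fun i => ((v i : ℚ))) P = (t : ℚ)) := by
  obtain ⟨N, hNpos, hint⟩ := integLemma m P hconst
  have hN1 : (1 : ℚ) ≤ (N : ℚ) := by exact_mod_cast hNpos
  have hpos := posLemma m P (N : ℚ) hN1 hlead
  have halt : AltQuantNat m (fun v => ∃ t : ℕ, 0 < t ∧
      MvPolynomial.eval (fun i => ((v i : ℚ) * (N : ℚ))) P = (t : ℚ)) := by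
    refine altMono m _ _ (fun v hv => ?_) hpos
    obtain ⟨z, hz⟩ := hint v
    have hz0 : 0 < z := by exact_mod_cast hz ▸ hv
    refine ⟨z.toNat, by omega, ?_⟩
    rw [hz]
    have : ((z.toNat : ℤ) : ℚ) = (z : ℚ) := by rw [Int.toNat_of_nonneg hz0.le]
    push_cast at this ⊢
    exact this.symm
  refine ⟨⟨N, hNpos, halt⟩, ?_⟩
  refine ddagger_of_alt m _ N hNpos ?_
  refine altMono m _ _ (fun v hv => ?_) halt
  show ∃ t : ℕ, 0 < t ∧ MvPolynomial.eval (fun i => (((v i * N : ℕ)) : ℚ)) P = (t : ℚ)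
  have he : (fun i => (((v i * N : ℕ)) : ℚ)) = fun i => (v i : ℚ) * (N : ℚ) := by
    funext i; push_cast; ring
  rw [he]
  exact hv
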